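/- Per-null-hypothesis bound under general dependence: if P is super-uniform, A ≥ 0 is a constant, β is a shape function, and R ≥ 1 is any positive-integer-valued random variable, then E[ 1(P ≤ αβ(R)A) / R ] ≤ αA. Consequently, summing over nulls with ∑_i A_i ≤ 1 yields FDR(t) ≤ α for TOAD with a shape function. -/

import Mathlib

open MeasureTheory Finset Filter
open scoped ENNReal Topology

lemma tsum_aux_partial (n : ℕ) (hn : 1 ≤ n) (N : ℕ) :
    ∑ k ∈ Finset.range N, (if n ≤ k + 1 then (((k : ℝ) + 1) * ((k : ℝ) + 2))⁻¹ else 0)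
      = ((n : ℝ))⁻¹ - ((max n (N + 1) : ℕ) : ℝ)⁻¹ := by
  induction N with
  | zero => simp [Nat.max_eq_left hn]
  | succ N ih =>
    rw [Finset.sum_range_succ, ih]
    by_cases h : n ≤ N + 1
    · have h2 : n ≤ N + 2 := h.trans (by omega)
      rw [if_pos h, max_eq_right h, max_eq_right h2]
      have e1 : ((N : ℝ) + 1) ≠ 0 := by positivity
      have e2 : ((N : ℝ) + 2) ≠ 0 := by positivity
      push_cast
      field_simp
      ring
    · rw [if_neg h, max_eq_left (by omega), max_eq_left (by omega)]
      ring

lemma tsum_aux_hasSum (n : ℕ) (hn : 1 ≤ n) :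
    HasSum (fun k : ℕ => if n ≤ k + 1 then (((k : ℝ) + 1) * ((k : ℝ) + 2))⁻¹ else 0)
      ((n : ℝ))⁻¹ := by
  have hnn : ∀ k : ℕ, 0 ≤ (if n ≤ k + 1 then (((k : ℝ) + 1) * ((k : ℝ) + 2))⁻¹ else 0) := by
    intro k; split <;> positivity
  rw [hasSum_iff_tendsto_nat_of_nonneg hnn]
  have h1 : Tendsto (fun N : ℕ => ((max n (N + 1) : ℕ) : ℝ)⁻¹) atTop (𝓝 0) := by
    apply Filter.Tendsto.inv_tendsto_atTop
    apply tendsto_natCast_atTop_atTop.comp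
    apply tendsto_atTop_mono (fun N => le_max_right n (N + 1))
    exact tendsto_add_atTop_nat 1
  have := (tendsto_const_nhds (x := ((n : ℝ))⁻¹)).sub h1
  rw [sub_zero] at this
  refine this.congr fun N => ?_
  rw [tsum_aux_partial n hn N]

lemma key_tsum (n : ℕ) (hn : 1 ≤ n) :
    ∑' k : ℕ, (if n ≤ k + 1 then (((k : ℝ≥0∞) + 1) * ((k : ℝ≥0∞) + 2))⁻¹ else 0)
      = ((n : ℝ≥0∞))⁻¹ := by
  have hnn : ∀ k : ℕ, 0 ≤ (if n ≤ k + 1 then (((k : ℝ) + 1) * ((k : ℝ) + 2))⁻¹ else 0) := by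
    intro k; split <;> positivity
  have hs := tsum_aux_hasSum n hn
  have h1 : ∀ k : ℕ, ENNReal.ofReal (if n ≤ k + 1 then (((k : ℝ) + 1) * ((k : ℝ) + 2))⁻¹ else 0)
      = (if n ≤ k + 1 then (((k : ℝ≥0∞) + 1) * ((k : ℝ≥0∞) + 2))⁻¹ else 0) := by
    intro k
    split
    · rw [ENNReal.ofReal_inv_of_pos (by positivity), ENNReal.ofReal_mul (by positivity)]
      norm_num
      rw [show ((k : ℝ) + 1) = ((k + 1 : ℕ) : ℝ) by push_cast; ring,
        show ((k : ℝ) + 2) = ((k + 2 : ℕ) : ℝ) by push_cast; ring,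
        ENNReal.ofReal_natCast, ENNReal.ofReal_natCast]
      push_cast; ring_nf
    · simp
  calc ∑' k : ℕ, (if n ≤ k + 1 then (((k : ℝ≥0∞) + 1) * ((k : ℝ≥0∞) + 2))⁻¹ else 0)
      = ∑' k : ℕ, ENNReal.ofReal (if n ≤ k + 1 then (((k : ℝ) + 1) * ((k : ℝ) + 2))⁻¹ else 0) := by
        exact (tsum_congr h1).symm
    _ = ENNReal.ofReal (∑' k : ℕ, (if n ≤ k + 1 then (((k : ℝ) + 1) * ((k : ℝ) + 2))⁻¹ else 0)) :=
        (ENNReal.ofReal_tsum_of_nonneg hnn hs.summable).symm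
    _ = ((n : ℝ≥0∞))⁻¹ := by
        rw [hs.tsum_eq, ENNReal.ofReal_inv_of_pos (by exact_mod_cast hn), ENNReal.ofReal_natCast]


/-- Per-null-hypothesis bound under general dependence: if each null `P_i` is
super-uniform, `A_i ≥ 0` are constants, `β` is a shape function arising from
a distribution `ν` on the positive reals, and `R ≥ 1` is any integer-valued
random variable (arbitrarily dependent on the p-values), then
`E[1(P_i ≤ α·β(R)·A_i)/R] ≤ α·A_i` for each null `i`; consequently, summing
over nulls with `∑ A_i ≤ 1` yields the FDR bound
`∑_{i ∈ H₀} E[1(P_i ≤ α·β(R)·A_i)/R] ≤ α`. -/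
theorem per_null_bound_general_dependence
    {Ω : Type*} [MeasurableSpace Ω] (μ : Measure Ω) [IsProbabilityMeasure μ]
    (ν : Measure ℝ) [IsProbabilityMeasure ν]
    (hνpos : ν (Set.Iic 0) = 0) (hνint : Integrable id ν)
    (β : ℕ → ℝ) (hβ : ∀ r : ℕ, β r = ∫ x, (if x ≤ (r : ℝ) then x else 0) ∂ν)
    (α : ℝ) (hα : α ∈ Set.Ioo (0 : ℝ) 1)
    (t : ℕ) (H0 : Finset ℕ) (hH0 : H0 ⊆ Finset.Icc 1 t)
    (A : ℕ → ℝ) (hA : ∀ i, 0 ≤ A i) (hAsum : ∑ i ∈ Finset.Icc 1 t, A i ≤ 1)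
    (P : ℕ → Ω → ℝ) (hPmeas : ∀ i, Measurable (P i))
    (hrange : ∀ i ω, P i ω ∈ Set.Icc (0 : ℝ) 1)
    (hsup : ∀ i ∈ H0, ∀ u : ℝ, 0 ≤ u → u ≤ 1 →
      μ {ω | P i ω ≤ u} ≤ ENNReal.ofReal u)
    (R : Ω → ℕ) (hRmeas : Measurable R) (hR : ∀ ω, 1 ≤ R ω) :
    (∀ i ∈ H0,
      ∫ ω, (if P i ω ≤ α * β (R ω) * A i then (1 : ℝ) else 0) / (R ω : ℝ) ∂μ
        ≤ α * A i) ∧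
    ∑ i ∈ H0,
      ∫ ω, (if P i ω ≤ α * β (R ω) * A i then (1 : ℝ) else 0) / (R ω : ℝ) ∂μ
        ≤ α := by
  -- basic facts about ν and β
  have hae : ∀ᵐ x ∂ν, 0 < x := by
    rw [ae_iff]
    convert hνpos using 2
    ext x
    simp [not_lt]
  have βint : ∀ r : ℕ, Integrable (fun x => if x ≤ (r : ℝ) then x else 0) ν := by
    intro r
    apply hνint.mono
    · apply Measurable.aestronglyMeasurable
      exact measurable_id.ite (measurableSet_le measurable_id measurable_const) measurable_const
    · filter_upwards with x
      split <;> simp [abs_nonneg, le_abs_self, abs_le_abs, id]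
  have βnonneg : ∀ r : ℕ, 0 ≤ β r := by
    intro r
    rw [hβ r]
    apply integral_nonneg_of_ae
    filter_upwards [hae] with x hx
    split
    · exact hx.le
    · exact le_rfl
  have βmono : ∀ m r : ℕ, m ≤ r → β m ≤ β r := by
    intro m r hmr
    rw [hβ m, hβ r]
    apply integral_mono_ae (βint m) (βint r)
    filter_upwards [hae] with x hx
    by_cases h1 : x ≤ (m : ℝ)
    · rw [if_pos h1, if_pos (h1.trans (by exact_mod_cast hmr))]
    · rw [if_neg h1]
      split
      · exact hx.le
      · exact le_rfl
  -- the ofReal of β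
  have βofReal : ∀ r : ℕ, ENNReal.ofReal (β r)
      = ∫⁻ x, ENNReal.ofReal (if x ≤ (r : ℝ) then x else 0) ∂ν := by
    intro r
    rw [hβ r]
    apply ofReal_integral_eq_lintegral_ofReal (βint r)
    filter_upwards [hae] with x hx
    split
    · exact hx.le
    · exact le_rfl
  -- the key weight sum bound
  have wsum : ∑' k : ℕ, (((k : ℝ≥0∞) + 1) * ((k : ℝ≥0∞) + 2))⁻¹ * ENNReal.ofReal (β (k + 1))
      ≤ 1 := by
    have step1 : ∀ k : ℕ, (((k : ℝ≥0∞) + 1) * ((k : ℝ≥0∞) + 2))⁻¹ * ENNReal.ofReal (β (k + 1))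
        = ∫⁻ x, (((k : ℝ≥0∞) + 1) * ((k : ℝ≥0∞) + 2))⁻¹
            * ENNReal.ofReal (if x ≤ ((k + 1 : ℕ) : ℝ) then x else 0) ∂ν := by
      intro k
      rw [βofReal (k + 1), ← lintegral_const_mul]
      exact ENNReal.measurable_ofReal.comp
        (measurable_id.ite (measurableSet_le measurable_id measurable_const) measurable_const)
    calc ∑' k : ℕ, (((k : ℝ≥0∞) + 1) * ((k : ℝ≥0∞) + 2))⁻¹ * ENNReal.ofReal (β (k + 1))
        = ∫⁻ x, ∑' k : ℕ, (((k : ℝ≥0∞) + 1) * ((k : ℝ≥0∞) + 2))⁻¹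
            * ENNReal.ofReal (if x ≤ ((k + 1 : ℕ) : ℝ) then x else 0) ∂ν := by
          rw [tsum_congr step1]
          exact (lintegral_tsum fun k =>
            ((measurable_const.mul (ENNReal.measurable_ofReal.comp
              (measurable_id.ite (measurableSet_le measurable_id measurable_const)
                measurable_const)))).aemeasurable).symm
      _ ≤ ∫⁻ _, (1 : ℝ≥0∞) ∂ν := by
          apply lintegral_mono_ae
          filter_upwards [hae] with x hx
          have hceil : 1 ≤ ⌈x⌉₊ := Nat.ceil_pos.mpr hx
          have hterm : ∀ k : ℕ, (((k : ℝ≥0∞) + 1) * ((k : ℝ≥0∞) + 2))⁻¹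
              * ENNReal.ofReal (if x ≤ ((k + 1 : ℕ) : ℝ) then x else 0)
              = ENNReal.ofReal x *
                (if ⌈x⌉₊ ≤ k + 1 then (((k : ℝ≥0∞) + 1) * ((k : ℝ≥0∞) + 2))⁻¹ else 0) := by
            intro k
            by_cases h : x ≤ ((k + 1 : ℕ) : ℝ)
            · rw [if_pos h, if_pos (Nat.ceil_le.mpr h), mul_comm]
            · rw [if_neg h, if_neg (fun hc => h (le_trans (Nat.le_ceil x)
                (by exact_mod_cast hc)))]
              simp
          calc ∑' k : ℕ, (((k : ℝ≥0∞) + 1) * ((k : ℝ≥0∞) + 2))⁻¹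
                * ENNReal.ofReal (if x ≤ ((k + 1 : ℕ) : ℝ) then x else 0)
              = ENNReal.ofReal x * ∑' k : ℕ,
                  (if ⌈x⌉₊ ≤ k + 1 then (((k : ℝ≥0∞) + 1) * ((k : ℝ≥0∞) + 2))⁻¹ else 0) := by
                rw [← ENNReal.tsum_mul_left]
                exact tsum_congr hterm
            _ = ENNReal.ofReal x * ((⌈x⌉₊ : ℝ≥0∞))⁻¹ := by rw [key_tsum _ hceil]
            _ ≤ (⌈x⌉₊ : ℝ≥0∞) * ((⌈x⌉₊ : ℝ≥0∞))⁻¹ := by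
                apply mul_le_mul_left
                calc ENNReal.ofReal x ≤ ENNReal.ofReal ((⌈x⌉₊ : ℝ)) :=
                      ENNReal.ofReal_le_ofReal (Nat.le_ceil x)
                  _ = (⌈x⌉₊ : ℝ≥0∞) := ENNReal.ofReal_natCast _
            _ ≤ 1 := ENNReal.mul_inv_le_one _
      _ = 1 := by simp
  -- the per-null bound
  have key : ∀ i ∈ H0,
      ∫ ω, (if P i ω ≤ α * β (R ω) * A i then (1 : ℝ) else 0) / (R ω : ℝ) ∂μ ≤ α * A i := by
    intro i hi
    set c := α * A i with hcdef
    have hc : 0 ≤ c := mul_nonneg hα.1.le (hA i)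
    have hβR : Measurable fun ω => α * β (R ω) * A i :=
      ((measurable_const.mul (measurable_from_top.comp hRmeas)).mul measurable_const)
    set S : Set Ω := {ω | P i ω ≤ α * β (R ω) * A i} with hSdef
    have hS : MeasurableSet S := measurableSet_le (hPmeas i) hβR
    set T : ℕ → Set Ω := fun k => {ω | R ω ≤ k + 1} ∩ S with hTdef
    have hT : ∀ k, MeasurableSet (T k) :=
      fun k => (hRmeas (show MeasurableSet {n : ℕ | n ≤ k + 1} from trivial)).inter hS
    set f : Ω → ℝ := fun ω => (if P i ω ≤ α * β (R ω) * A i then (1 : ℝ) else 0) / (R ω : ℝ)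
      with hfdef
    have hfnn : 0 ≤ᵐ[μ] f := by
      filter_upwards with ω
      simp only [hfdef]
      positivity
    have hfmeas : Measurable f := by
      apply Measurable.div
      · exact (measurable_const.ite hS measurable_const)
      · exact (measurable_from_top.comp hRmeas)
    have hRpos : ∀ ω, (0 : ℝ) < (R ω : ℝ) := fun ω => by exact_mod_cast hR ω
    have step0 : ∀ ω, ENNReal.ofReal (f ω)
        = S.indicator (fun ω => ((R ω : ℝ≥0∞))⁻¹) ω := by
      intro ω
      simp only [hfdef]
      by_cases hω : ω ∈ S
      · have hω' : P i ω ≤ α * β (R ω) * A i := hω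
        rw [Set.indicator_of_mem hω, if_pos hω', one_div,
          ENNReal.ofReal_inv_of_pos (hRpos ω), ENNReal.ofReal_natCast]
      · have hω' : ¬ P i ω ≤ α * β (R ω) * A i := hω
        rw [Set.indicator_of_notMem hω, if_neg hω']
        simp
    have ptwise : ∀ ω, S.indicator (fun ω => ((R ω : ℝ≥0∞))⁻¹) ω
        ≤ ∑' k : ℕ, (T k).indicator (fun _ => (((k : ℝ≥0∞) + 1) * ((k : ℝ≥0∞) + 2))⁻¹) ω := by
      intro ω
      by_cases hω : ω ∈ S
      · rw [Set.indicator_of_mem hω]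
        have heq : ∀ k : ℕ, (T k).indicator
            (fun _ => (((k : ℝ≥0∞) + 1) * ((k : ℝ≥0∞) + 2))⁻¹) ω
            = (if R ω ≤ k + 1 then (((k : ℝ≥0∞) + 1) * ((k : ℝ≥0∞) + 2))⁻¹ else 0) := by
          intro k
          by_cases h : R ω ≤ k + 1
          · rw [if_pos h, Set.indicator_of_mem (show ω ∈ T k from ⟨h, hω⟩)]
          · rw [if_neg h, Set.indicator_of_notMem (fun hc : ω ∈ T k => h hc.1)]
        rw [tsum_congr heq, key_tsum _ (hR ω)]
      · rw [Set.indicator_of_notMem hω]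
        exact zero_le
    have lintbound : ∫⁻ ω, ENNReal.ofReal (f ω) ∂μ ≤ ENNReal.ofReal c := by
      calc ∫⁻ ω, ENNReal.ofReal (f ω) ∂μ
          = ∫⁻ ω, S.indicator (fun ω => ((R ω : ℝ≥0∞))⁻¹) ω ∂μ := by
            exact lintegral_congr step0
        _ ≤ ∫⁻ ω, ∑' k : ℕ,
              (T k).indicator (fun _ => (((k : ℝ≥0∞) + 1) * ((k : ℝ≥0∞) + 2))⁻¹) ω ∂μ :=
            lintegral_mono ptwise
        _ = ∑' k : ℕ, ∫⁻ ω,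
              (T k).indicator (fun _ => (((k : ℝ≥0∞) + 1) * ((k : ℝ≥0∞) + 2))⁻¹) ω ∂μ :=
            lintegral_tsum fun k => (measurable_const.indicator (hT k)).aemeasurable
        _ = ∑' k : ℕ, (((k : ℝ≥0∞) + 1) * ((k : ℝ≥0∞) + 2))⁻¹ * μ (T k) := by
            exact tsum_congr fun k => lintegral_indicator_const (hT k) _
        _ ≤ ∑' k : ℕ, (((k : ℝ≥0∞) + 1) * ((k : ℝ≥0∞) + 2))⁻¹
              * (ENNReal.ofReal c * ENNReal.ofReal (β (k + 1))) := by
            apply ENNReal.tsum_le_tsum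
            intro k
            apply mul_le_mul_right
            have hsub : T k ⊆ {ω | P i ω ≤ α * β (k + 1) * A i} := by
              rintro ω ⟨h1, h2⟩
              simp only [hSdef, Set.mem_setOf_eq] at h2 ⊢
              refine h2.trans ?_
              apply mul_le_mul_of_nonneg_right _ (hA i)
              exact mul_le_mul_of_nonneg_left (βmono _ _ h1) hα.1.le
            have hu : (0 : ℝ) ≤ α * β (k + 1) * A i :=
              mul_nonneg (mul_nonneg hα.1.le (βnonneg _)) (hA i)
            have hμU : μ {ω | P i ω ≤ α * β (k + 1) * A i}
                ≤ ENNReal.ofReal (α * β (k + 1) * A i) := by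
              by_cases h1 : α * β (k + 1) * A i ≤ 1
              · exact hsup i hi _ hu h1
              · calc μ {ω | P i ω ≤ α * β (k + 1) * A i} ≤ 1 := prob_le_one
                  _ = ENNReal.ofReal 1 := by simp
                  _ ≤ ENNReal.ofReal (α * β (k + 1) * A i) :=
                      ENNReal.ofReal_le_ofReal (le_of_lt (not_le.mp h1))
            calc μ (T k) ≤ μ {ω | P i ω ≤ α * β (k + 1) * A i} := measure_mono hsub
              _ ≤ ENNReal.ofReal (α * β (k + 1) * A i) := hμU
              _ = ENNReal.ofReal (c * β (k + 1)) := by rw [hcdef]; ring_nf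
              _ = ENNReal.ofReal c * ENNReal.ofReal (β (k + 1)) := ENNReal.ofReal_mul hc
        _ = ENNReal.ofReal c * ∑' k : ℕ,
              (((k : ℝ≥0∞) + 1) * ((k : ℝ≥0∞) + 2))⁻¹ * ENNReal.ofReal (β (k + 1)) := by
            rw [← ENNReal.tsum_mul_left]
            exact tsum_congr fun k => by ring
        _ ≤ ENNReal.ofReal c * 1 := mul_le_mul_right wsum _
        _ = ENNReal.ofReal c := mul_one _
    rw [show (∫ ω, (if P i ω ≤ α * β (R ω) * A i then (1 : ℝ) else 0) / (R ω : ℝ) ∂μ)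
        = ∫ ω, f ω ∂μ from rfl]
    rw [integral_eq_lintegral_of_nonneg_ae hfnn hfmeas.aestronglyMeasurable]
    calc (∫⁻ ω, ENNReal.ofReal (f ω) ∂μ).toReal
        ≤ (ENNReal.ofReal c).toReal := ENNReal.toReal_mono ENNReal.ofReal_ne_top lintbound
      _ = c := ENNReal.toReal_ofReal hc
  refine ⟨key, ?_⟩
  calc ∑ i ∈ H0, ∫ ω, (if P i ω ≤ α * β (R ω) * A i then (1 : ℝ) else 0) / (R ω : ℝ) ∂μ
      ≤ ∑ i ∈ H0, α * A i := Finset.sum_le_sum key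
    _ = α * ∑ i ∈ H0, A i := by rw [Finset.mul_sum]
    _ ≤ α * ∑ i ∈ Finset.Icc 1 t, A i := by
        apply mul_le_mul_of_nonneg_left _ hα.1.le
        exact Finset.sum_le_sum_of_subset_of_nonneg hH0 (fun i _ _ => hA i)
    _ ≤ α * 1 := mul_le_mul_of_nonneg_left hAsum hα.1.le
    _ = α := mul_one α
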